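/- arXiv:1903.12333 — 3 statements merged into one kernel-verified Lean document; each statement's English description precedes it below -/
import Mathlib

section
/- Let 𝒜 have size q ≥ 2, let A₁,…,A_m be a partition of 𝒜 into nonempty sets, and let C ⊆ 𝒜 × 𝒜 and an integer t with 0 < t < 2q be such that for every i ∈ {1,…,m}, every a ∈ A_i and every b ∈ 𝒜: 2·|C ∩ ({a} × 𝒜)| = t and 2q·|C ∩ (A_i × {b})| = t·|A_i|. Then (C, C̄) is an equitable 2-partition of the Hamming graph H(2,q) with quotient matrix [[t−2, 2q−t],[t, 2q−t−2]], which has eigenvalue λ₂(2,q) = −2. -/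
/-- `(C, Cᶜ)` is an equitable 2-partition of the graph `G` (both cells nonempty) with
quotient matrix `S`: every vertex of `C` has exactly `S 0 0` neighbors in `C` and `S 0 1`
neighbors in `Cᶜ`, and every vertex of `Cᶜ` has exactly `S 1 0` neighbors in `C` and
`S 1 1` neighbors in `Cᶜ`. -/
def IsEquitable2 {V : Type*} (G : SimpleGraph V) (C : Set V)
    (S : Matrix (Fin 2) (Fin 2) ℤ) : Prop :=
  C.Nonempty ∧ Cᶜ.Nonempty ∧
    (∀ x ∈ C, ((G.neighborSet x ∩ C).ncard : ℤ) = S 0 0 ∧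
      ((G.neighborSet x ∩ Cᶜ).ncard : ℤ) = S 0 1) ∧
    (∀ x ∈ Cᶜ, ((G.neighborSet x ∩ C).ncard : ℤ) = S 1 0 ∧
      ((G.neighborSet x ∩ Cᶜ).ncard : ℤ) = S 1 1)

/-- The Cartesian product `K_q □ K_{q'}` : the graph on pairs in which two vertices are
adjacent iff they differ in exactly one coordinate. -/
def rookGraph (α β : Type*) : SimpleGraph (α × β) where
  Adj x y := (x.1 = y.1 ∧ x.2 ≠ y.2) ∨ (x.1 ≠ y.1 ∧ x.2 = y.2)
  symm := ⟨by
    rintro ⟨a, b⟩ ⟨c, d⟩ (⟨h1, h2⟩ | ⟨h1, h2⟩)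
    · exact Or.inl ⟨h1.symm, h2.symm⟩
    · exact Or.inr ⟨h1.symm, h2.symm⟩⟩
  loopless := ⟨by rintro ⟨a, b⟩ (⟨h1, h2⟩ | ⟨h1, h2⟩) <;> simp_all⟩

lemma ncard_iUnion_fin {α : Type*} [Fintype α] {m : ℕ} (s : Fin m → Set α)
    (h : ∀ i j, i ≠ j → Disjoint (s i) (s j)) :
    (⋃ i, s i).ncard = ∑ i, (s i).ncard := by
  classical
  have hf : ∀ i, (s i).Finite := fun i => Set.toFinite _
  have he : (⋃ i, s i) = ↑(Finset.univ.biUnion (fun i => (hf i).toFinset)) := by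
    ext x
    simp only [Set.mem_iUnion, Finset.coe_biUnion, Finset.coe_univ, Set.mem_iUnion,
      Set.Finite.coe_toFinset, Set.mem_univ, Set.iUnion_true]
  rw [he, Set.ncard_coe_finset, Finset.card_biUnion]
  · exact Finset.sum_congr rfl fun i _ => (Set.ncard_eq_toFinset_card _ (hf i)).symm
  · intro i _ j _ hij
    rw [Function.onFun, Finset.disjoint_left]
    intro a ha hb
    exact (h i j hij).le_bot ⟨(hf i).mem_toFinset.1 ha, (hf j).mem_toFinset.1 hb⟩

-- line cardinality helpers
lemma row_ncard {𝒜 : Type*} [Fintype 𝒜] (a : 𝒜) :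
    ({p : 𝒜 × 𝒜 | p.1 = a}).ncard = Fintype.card 𝒜 := by
  have h : {p : 𝒜 × 𝒜 | p.1 = a} = (fun x => (a, x)) '' Set.univ := by
    ext ⟨u, v⟩
    constructor
    · rintro rfl; exact ⟨v, trivial, rfl⟩
    · rintro ⟨x, -, hx⟩; rw [← hx]; exact rfl
  rw [h, Set.ncard_image_of_injective _ (fun x y hxy => (Prod.mk.injEq _ _ _ _ ▸ hxy).2),
    Set.ncard_univ, Nat.card_eq_fintype_card]

lemma col_ncard {𝒜 : Type*} [Fintype 𝒜] (b : 𝒜) :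
    ({p : 𝒜 × 𝒜 | p.2 = b}).ncard = Fintype.card 𝒜 := by
  have h : {p : 𝒜 × 𝒜 | p.2 = b} = (fun x => (x, b)) '' Set.univ := by
    ext ⟨u, v⟩
    constructor
    · rintro rfl; exact ⟨u, trivial, rfl⟩
    · rintro ⟨x, -, hx⟩; rw [← hx]; exact rfl
  rw [h, Set.ncard_image_of_injective _ (fun x y hxy => (Prod.mk.injEq _ _ _ _ ▸ hxy).1),
    Set.ncard_univ, Nat.card_eq_fintype_card]

/-- Let `A₁, …, A_m` partition `𝒜` (with `|𝒜| = q`) into nonempty sets and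
let `C ⊆ 𝒜 × 𝒜` and `0 < t < 2q` be such that every row `{a} × 𝒜` contains `t/2`
elements of `C` and every part-column `A_i × {b}` contains `t·|A_i|/(2q)` elements of
`C`. Then `(C, Cᶜ)` is an equitable 2-partition of `H(2,q)` with quotient matrix
`[[t-2, 2q-t], [t, 2q-t-2]]`, which has eigenvalue `λ₂(2,q) = -2`. -/
theorem stmt7 {𝒜 : Type*} [Fintype 𝒜] [DecidableEq 𝒜] (q : ℕ)
    (hq : Fintype.card 𝒜 = q) (hq2 : 2 ≤ q)
    (m : ℕ) (A : Fin m → Set 𝒜)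
    (hne : ∀ i, (A i).Nonempty)
    (hdisj : ∀ i j, i ≠ j → Disjoint (A i) (A j))
    (hcover : ∀ a : 𝒜, ∃ i, a ∈ A i)
    (C : Set (𝒜 × 𝒜)) (t : ℤ) (ht0 : 0 < t) (ht1 : t < 2 * q)
    (hrow : ∀ (i : Fin m), ∀ a ∈ A i,
      2 * ((C ∩ {p : 𝒜 × 𝒜 | p.1 = a}).ncard : ℤ) = t)
    (hcol : ∀ (i : Fin m), ∀ a ∈ A i, ∀ b : 𝒜,
      2 * (q : ℤ) * ((C ∩ (A i ×ˢ ({b} : Set 𝒜))).ncard : ℤ) = t * ((A i).ncard : ℤ)) :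
    IsEquitable2 (rookGraph 𝒜 𝒜) C
      ![![t - 2, 2 * (q : ℤ) - t], ![t, 2 * (q : ℤ) - t - 2]] ∧
    (∃ v : Fin 2 → ℚ, v ≠ 0 ∧
      (Matrix.map ![![t - 2, 2 * (q : ℤ) - t], ![t, 2 * (q : ℤ) - t - 2]]
          ((↑) : ℤ → ℚ)).mulVec v = (-2 : ℚ) • v) := by
  classical
  have hq0 : (q : ℤ) ≠ 0 := by positivity
  -- row counts
  have hrow' : ∀ a : 𝒜, 2 * ((C ∩ {p : 𝒜 × 𝒜 | p.1 = a}).ncard : ℤ) = t := by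
    intro a; obtain ⟨i, hi⟩ := hcover a; exact hrow i a hi
  -- column counts
  have hcol' : ∀ b : 𝒜, 2 * ((C ∩ {p : 𝒜 × 𝒜 | p.2 = b}).ncard : ℤ) = t := by
    intro b
    have hU : C ∩ {p : 𝒜 × 𝒜 | p.2 = b} = ⋃ i, C ∩ (A i ×ˢ ({b} : Set 𝒜)) := by
      ext p
      simp only [Set.mem_inter_iff, Set.mem_iUnion, Set.mem_prod, Set.mem_singleton_iff,
        Set.mem_setOf_eq]
      constructor
      · rintro ⟨hp, hb⟩; obtain ⟨i, hi⟩ := hcover p.1; exact ⟨i, hp, hi, hb⟩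
      · rintro ⟨i, hp, _, hb⟩; exact ⟨hp, hb⟩
    have hdisj' : ∀ i j, i ≠ j →
        Disjoint (C ∩ (A i ×ˢ ({b} : Set 𝒜))) (C ∩ (A j ×ˢ ({b} : Set 𝒜))) := by
      intro i j hij
      refine Set.disjoint_left.2 ?_
      rintro p ⟨-, hpi, -⟩ ⟨-, hpj, -⟩
      exact (hdisj i j hij).le_bot ⟨hpi, hpj⟩
    have hAsum : ∑ i, ((A i).ncard : ℤ) = (q : ℤ) := by
      have hUA : (⋃ i, A i) = (Set.univ : Set 𝒜) := by
        ext a; simpa using hcover a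
      have := ncard_iUnion_fin A hdisj
      rw [hUA, Set.ncard_univ, Nat.card_eq_fintype_card, hq] at this
      exact_mod_cast this.symm
    have key : 2 * (q : ℤ) * ((C ∩ {p : 𝒜 × 𝒜 | p.2 = b}).ncard : ℤ) = t * q := by
      rw [hU, ncard_iUnion_fin _ hdisj']
      push_cast
      rw [Finset.mul_sum]
      have hsum : ∑ i, 2 * (q : ℤ) * ((C ∩ (A i ×ˢ ({b} : Set 𝒜))).ncard : ℤ) =
          ∑ i, t * ((A i).ncard : ℤ) :=
        Finset.sum_congr rfl fun i _ => hcol i (hne i).choose (hne i).choose_spec b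
      rw [hsum, ← Finset.mul_sum, hAsum]
    have h2 : (q : ℤ) * (2 * ((C ∩ {p : 𝒜 × 𝒜 | p.2 = b}).ncard : ℤ)) = (q : ℤ) * t := by
      ring_nf; ring_nf at key; linarith
    exact mul_left_cancel₀ hq0 h2
  -- complement counts on lines
  have hcomp : ∀ L : Set (𝒜 × 𝒜), L.ncard = q → 2 * ((C ∩ L).ncard : ℤ) = t →
      2 * ((Cᶜ ∩ L).ncard : ℤ) = 2 * q - t := by
    intro L hL hCL
    have hun : (C ∩ L) ∪ (Cᶜ ∩ L) = L := by
      rw [← Set.union_inter_distrib_right, Set.union_compl_self, Set.univ_inter]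
    have hd : Disjoint (C ∩ L) (Cᶜ ∩ L) :=
      Set.disjoint_left.2 fun p ⟨hp, _⟩ ⟨hp', _⟩ => hp' hp
    have := Set.ncard_union_eq hd (Set.toFinite _) (Set.toFinite _)
    rw [hun, hL] at this
    have : ((C ∩ L).ncard : ℤ) + ((Cᶜ ∩ L).ncard : ℤ) = (q : ℤ) := by exact_mod_cast this.symm
    linarith
  have hrowc : ∀ a : 𝒜, 2 * ((Cᶜ ∩ {p : 𝒜 × 𝒜 | p.1 = a}).ncard : ℤ) = 2 * q - t :=
    fun a => hcomp _ (by rw [row_ncard, hq]) (hrow' a)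
  have hcolc : ∀ b : 𝒜, 2 * ((Cᶜ ∩ {p : 𝒜 × 𝒜 | p.2 = b}).ncard : ℤ) = 2 * q - t :=
    fun b => hcomp _ (by rw [col_ncard, hq]) (hcol' b)
  -- neighbor set decomposition
  have hnbr : ∀ (x : 𝒜 × 𝒜) (D : Set (𝒜 × 𝒜)),
      ((rookGraph 𝒜 𝒜).neighborSet x ∩ D).ncard =
        ((D ∩ {p : 𝒜 × 𝒜 | p.1 = x.1}) \ {x}).ncard +
        ((D ∩ {p : 𝒜 × 𝒜 | p.2 = x.2}) \ {x}).ncard := by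
    rintro ⟨a, b⟩ D
    have hdec : (rookGraph 𝒜 𝒜).neighborSet (a, b) ∩ D =
        ((D ∩ {p : 𝒜 × 𝒜 | p.1 = a}) \ {(a, b)}) ∪
        ((D ∩ {p : 𝒜 × 𝒜 | p.2 = b}) \ {(a, b)}) := by
      ext ⟨u, v⟩
      simp only [SimpleGraph.mem_neighborSet, rookGraph, Set.mem_inter_iff, Set.mem_union,
        Set.mem_diff, Set.mem_singleton_iff, Set.mem_setOf_eq, Prod.mk.injEq, not_and]
      constructor
      · rintro ⟨⟨h1, h2⟩ | ⟨h1, h2⟩, hD⟩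
        · exact Or.inl ⟨⟨hD, h1.symm⟩, fun hu hv => h2 hv.symm⟩
        · exact Or.inr ⟨⟨hD, h2.symm⟩, fun hu _ => h1 hu.symm⟩
      · rintro (⟨⟨hD, h1⟩, h2⟩ | ⟨⟨hD, h1⟩, h2⟩)
        · exact ⟨Or.inl ⟨h1.symm, fun hv => h2 h1 hv.symm⟩, hD⟩
        · by_cases ha : u = a
          · exact absurd (h2 ha h1) not_false
          · exact ⟨Or.inr ⟨fun h => ha h.symm, h1.symm⟩, hD⟩
    have hd : Disjoint ((D ∩ {p : 𝒜 × 𝒜 | p.1 = a}) \ {(a, b)})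
        ((D ∩ {p : 𝒜 × 𝒜 | p.2 = b}) \ {(a, b)}) := by
      refine Set.disjoint_left.2 ?_
      rintro ⟨u, v⟩ ⟨⟨-, h1⟩, h2⟩ ⟨⟨-, h3⟩, -⟩
      exact h2 (by simp_all)
    rw [hdec, Set.ncard_union_eq hd (Set.toFinite _) (Set.toFinite _)]
  -- counting through a point
  have hthrough : ∀ (x : 𝒜 × 𝒜) (D : Set (𝒜 × 𝒜)) (L : Set (𝒜 × 𝒜)), x ∈ D → x ∈ L →
      (((D ∩ L) \ {x}).ncard : ℤ) = ((D ∩ L).ncard : ℤ) - 1 := by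
    intro x D L hD hL
    rw [Set.ncard_diff_singleton_of_mem (Set.mem_inter hD hL)]
    have h1 : 1 ≤ (D ∩ L).ncard :=
      (Set.ncard_pos (Set.toFinite _)).2 ⟨x, Set.mem_inter hD hL⟩
    push_cast [Nat.cast_sub h1]
    ring
  have hmiss : ∀ (x : 𝒜 × 𝒜) (D : Set (𝒜 × 𝒜)) (L : Set (𝒜 × 𝒜)), x ∉ D →
      (((D ∩ L) \ {x}).ncard : ℤ) = ((D ∩ L).ncard : ℤ) := by
    intro x D L hD
    rw [Set.diff_singleton_eq_self (fun h => hD h.1)]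
  -- nonemptiness
  have hAne : Nonempty 𝒜 := Fintype.card_pos_iff.1 (by omega)
  obtain ⟨a0⟩ := hAne
  have hCne : C.Nonempty := by
    have := hrow' a0
    by_contra hC
    rw [Set.not_nonempty_iff_eq_empty] at hC
    simp [hC] at this
    omega
  have hCcne : Cᶜ.Nonempty := by
    have := hrowc a0
    by_contra hC
    rw [Set.not_nonempty_iff_eq_empty] at hC
    simp [hC] at this
    omega
  refine ⟨⟨hCne, hCcne, ?_, ?_⟩, ?_⟩
  · rintro ⟨a, b⟩ hx
    constructor
    · have := hnbr (a, b) C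
      have h1 := hthrough (a, b) C {p : 𝒜 × 𝒜 | p.1 = a} hx rfl
      have h2 := hthrough (a, b) C {p : 𝒜 × 𝒜 | p.2 = b} hx rfl
      have hr := hrow' a
      have hc := hcol' b
      simp only [Matrix.cons_val', Matrix.cons_val_zero, Matrix.empty_val',
        Matrix.cons_val_fin_one]
      push_cast [this]
      linarith
    · have := hnbr (a, b) Cᶜ
      have h1 := hmiss (a, b) Cᶜ {p : 𝒜 × 𝒜 | p.1 = a} (by simpa using hx)
      have h2 := hmiss (a, b) Cᶜ {p : 𝒜 × 𝒜 | p.2 = b} (by simpa using hx)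
      have hr := hrowc a
      have hc := hcolc b
      simp only [Matrix.cons_val', Matrix.cons_val_zero, Matrix.cons_val_one, Matrix.head_cons,
        Matrix.empty_val', Matrix.cons_val_fin_one, Matrix.vecHead, Matrix.vecTail]
      push_cast [this]
      linarith
  · rintro ⟨a, b⟩ hx
    constructor
    · have := hnbr (a, b) C
      have h1 := hmiss (a, b) C {p : 𝒜 × 𝒜 | p.1 = a} hx
      have h2 := hmiss (a, b) C {p : 𝒜 × 𝒜 | p.2 = b} hx
      have hr := hrow' a
      have hc := hcol' b
      simp only [Matrix.cons_val', Matrix.cons_val_zero, Matrix.cons_val_one, Matrix.head_cons,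
        Matrix.empty_val', Matrix.cons_val_fin_one, Matrix.vecHead, Matrix.vecTail]
      push_cast [this]
      linarith
    · have := hnbr (a, b) Cᶜ
      have h1 := hthrough (a, b) Cᶜ {p : 𝒜 × 𝒜 | p.1 = a} hx rfl
      have h2 := hthrough (a, b) Cᶜ {p : 𝒜 × 𝒜 | p.2 = b} hx rfl
      have hr := hrowc a
      have hc := hcolc b
      simp only [Matrix.cons_val', Matrix.cons_val_zero, Matrix.cons_val_one, Matrix.head_cons,
        Matrix.empty_val', Matrix.cons_val_fin_one, Matrix.vecHead, Matrix.vecTail]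
      push_cast [this]
      linarith
  · refine ⟨![(2 * q - t : ℚ), -(t : ℚ)], ?_, ?_⟩
    · intro h
      have := congrFun h 1
      simp at this
      exact absurd this (by exact_mod_cast ht0.ne')
    · funext i
      fin_cases i <;>
        simp [Matrix.mulVec, dotProduct, Fin.sum_univ_two, Matrix.map_apply, Matrix.map, Matrix.of_apply] <;>
        ring
end

section
/- Let n ≥ 2, let 𝒜 have size q ≥ 2, let A₁,…,A_{n−1} be a partition of 𝒜 into nonempty sets, and let C ⊆ 𝒜 × 𝒜 and an integer t with 0 < t < 2q be such that for every i ∈ {1,…,n−1}, every a ∈ A_i and every b ∈ 𝒜: 2·|C ∩ ({a} × 𝒜)| = t and 2q·|C ∩ (A_i × {b})| = t·|A_i|. Define C_π⁺ = {x ∈ 𝒜^n : (x₁, x_{i+1}) ∈ C, where i is the unique index with x₁ ∈ A_i}. Then (C_π⁺, its complement) is an equitable 2-partition of the Hamming graph H(n,q) with quotient matrix [[t−2+(n−2)(q−1), 2q−t],[t, 2q−t−2+(n−2)(q−1)]], which has eigenvalue λ₂(n,q) = (q−1)n − 2q. -/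
/-- The Hamming graph `H(n,q)` on the vertex set `𝒜ⁿ` (where `|𝒜| = q`): two vertices are
adjacent iff they differ in exactly one coordinate. -/
def hammingGraph (n : ℕ) (𝒜 : Type*) [DecidableEq 𝒜] : SimpleGraph (Fin n → 𝒜) where
  Adj x y := hammingDist x y = 1
  symm := ⟨fun x y h => (hammingDist_comm y x).trans h⟩
  loopless := ⟨fun x h => by simp [hammingDist_self] at h⟩

open Set Function

lemma ncard_iUnion_eq {α : Type*} [Finite α] {ι : Type*} [Fintype ι] (g : ι → Set α)
    (hdis : ∀ i j, i ≠ j → Disjoint (g i) (g j)) :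
    (⋃ i, g i).ncard = ∑ i, (g i).ncard := by
  classical
  have hfin : ∀ i, (g i).Finite := fun i => Set.toFinite _
  rw [Set.ncard_eq_toFinset_card _ (Set.toFinite _)]
  have : (Set.toFinite (⋃ i, g i)).toFinset = Finset.univ.biUnion
      (fun i => (hfin i).toFinset) := by
    ext a; simp
  rw [this, Finset.card_biUnion]
  · exact Finset.sum_congr rfl fun i _ => (Set.ncard_eq_toFinset_card _ (hfin i)).symm
  · intro i _ j _ hij
    simpa [Finset.disjoint_left, Set.disjoint_left] using hdis i j hij

lemma nbr_decomp {𝒜 : Type*} [Fintype 𝒜] [DecidableEq 𝒜] {n : ℕ} (x : Fin n → 𝒜)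
    (S : Set (Fin n → 𝒜)) :
    (hammingGraph n 𝒜).neighborSet x ∩ S
      = ⋃ j, (fun a => Function.update x j a) '' {a | a ≠ x j ∧ Function.update x j a ∈ S} := by
  classical
  ext y
  simp only [SimpleGraph.mem_neighborSet, Set.mem_inter_iff, Set.mem_iUnion, Set.mem_image,
    Set.mem_setOf_eq, hammingGraph]
  constructor
  · rintro ⟨hd, hy⟩
    change (Finset.univ.filter fun i => x i ≠ y i).card = 1 at hd
    rw [Finset.card_eq_one] at hd
    obtain ⟨j, hj⟩ := hd
    have hyx : y = Function.update x j (y j) := by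
      funext i
      rcases eq_or_ne i j with rfl | hij
      · simp
      · rw [Function.update_of_ne hij]
        by_contra hne
        have : i ∈ ({j} : Finset (Fin n)) := hj ▸ (by simp [Ne.symm hne])
        simp at this; exact hij this
    refine ⟨j, y j, ⟨?_, ?_⟩, hyx.symm⟩
    · have : j ∈ ({j} : Finset (Fin n)) := by simp
      rw [← hj] at this; simpa using (Finset.mem_filter.mp this).2.symm
    · rwa [← hyx]
  · rintro ⟨j, a, ⟨ha, hS⟩, rfl⟩
    refine ⟨?_, hS⟩
    change (Finset.univ.filter fun i => x i ≠ Function.update x j a i).card = 1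
    have : (Finset.univ.filter fun i => x i ≠ Function.update x j a i) = {j} := by
      ext i
      simp only [Finset.mem_filter, Finset.mem_univ, true_and, Finset.mem_singleton]
      rcases eq_or_ne i j with rfl | hij
      · simp [Ne.symm ha]
      · simp [Function.update_of_ne hij, hij]
    rw [this, Finset.card_singleton]

lemma nbr_count {𝒜 : Type*} [Fintype 𝒜] [DecidableEq 𝒜] {n : ℕ} (x : Fin n → 𝒜)
    (S : Set (Fin n → 𝒜)) :
    ((hammingGraph n 𝒜).neighborSet x ∩ S).ncard
      = ∑ j : Fin n, {a : 𝒜 | a ≠ x j ∧ Function.update x j a ∈ S}.ncard := by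
  rw [nbr_decomp]
  rw [ncard_iUnion_eq]
  · refine Finset.sum_congr rfl fun j _ => ?_
    exact Set.ncard_image_of_injective _ (fun a b hab => by
      have := congrFun hab j; simpa using this)
  · intro i j hij
    rw [Set.disjoint_left]
    rintro y ⟨a, ⟨ha, _⟩, rfl⟩ ⟨b, ⟨hb, _⟩, hy⟩
    have := congrFun hy i
    simp only [Function.update_of_ne hij, Function.update_self] at this
    exact ha this.symm

/-- Construction A; here `n = m + 2 ≥ 2`: Let `A₁, …, A_{n-1}` partition
`𝒜` (with `|𝒜| = q`) into nonempty sets, and let `C ⊆ 𝒜 × 𝒜` and `0 < t < 2q` satisfy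
the row/column distribution conditions. Define
`C_π⁺ = {x ∈ 𝒜ⁿ : (x₁, x_{i+1}) ∈ C where i is the unique index with x₁ ∈ A_i}`.
Then `(C_π⁺, its complement)` is an equitable 2-partition of `H(n,q)` with quotient
matrix `[[t-2+(n-2)(q-1), 2q-t], [t, 2q-t-2+(n-2)(q-1)]]`, which has eigenvalue
`λ₂(n,q) = (q-1)n - 2q`. -/
theorem stmt8 {𝒜 : Type*} [Fintype 𝒜] [DecidableEq 𝒜] (q : ℕ)
    (hq : Fintype.card 𝒜 = q) (hq2 : 2 ≤ q)
    (m : ℕ) (A : Fin (m + 1) → Set 𝒜)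
    (hne : ∀ i, (A i).Nonempty)
    (hdisj : ∀ i j, i ≠ j → Disjoint (A i) (A j))
    (hcover : ∀ a : 𝒜, ∃ i, a ∈ A i)
    (C : Set (𝒜 × 𝒜)) (t : ℤ) (ht0 : 0 < t) (ht1 : t < 2 * q)
    (hrow : ∀ (i : Fin (m + 1)), ∀ a ∈ A i,
      2 * ((C ∩ {p : 𝒜 × 𝒜 | p.1 = a}).ncard : ℤ) = t)
    (hcol : ∀ (i : Fin (m + 1)), ∀ a ∈ A i, ∀ b : 𝒜,
      2 * (q : ℤ) * ((C ∩ (A i ×ˢ ({b} : Set 𝒜))).ncard : ℤ) = t * ((A i).ncard : ℤ)) :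
    IsEquitable2 (hammingGraph (m + 2) 𝒜)
      {x : Fin (m + 2) → 𝒜 | ∃ i : Fin (m + 1), x 0 ∈ A i ∧ (x 0, x i.succ) ∈ C}
      ![![t - 2 + (m : ℤ) * ((q : ℤ) - 1), 2 * (q : ℤ) - t],
        ![t, 2 * (q : ℤ) - t - 2 + (m : ℤ) * ((q : ℤ) - 1)]] ∧
    (∃ v : Fin 2 → ℚ, v ≠ 0 ∧
      (Matrix.map ![![t - 2 + (m : ℤ) * ((q : ℤ) - 1), 2 * (q : ℤ) - t],
          ![t, 2 * (q : ℤ) - t - 2 + (m : ℤ) * ((q : ℤ) - 1)]]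
          ((↑) : ℤ → ℚ)).mulVec v = (((q : ℚ) - 1) * ((m : ℚ) + 2) - 2 * q) • v) := by
  classical
  set Cπ : Set (Fin (m + 2) → 𝒜) :=
    {x : Fin (m + 2) → 𝒜 | ∃ i : Fin (m + 1), x 0 ∈ A i ∧ (x 0, x i.succ) ∈ C} with hCπ
  have hq0 : (q : ℤ) ≠ 0 := by exact_mod_cast (by omega : q ≠ 0)
  have huniq : ∀ (a : 𝒜) (i j : Fin (m + 1)), a ∈ A i → a ∈ A j → i = j := by
    intro a i j hi hj
    by_contra h
    exact absurd hj (Set.disjoint_left.mp (hdisj i j h) hi)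
  have hmem : ∀ (x : Fin (m + 2) → 𝒜) (i : Fin (m + 1)), x 0 ∈ A i →
      (x ∈ Cπ ↔ (x 0, x i.succ) ∈ C) := by
    intro x i hx0
    constructor
    · rintro ⟨j, hj, hC⟩
      rw [huniq _ j i hj hx0] at hC; exact hC
    · intro h; exact ⟨i, hx0, h⟩
  -- row counts
  have hR : ∀ a : 𝒜, 2 * (({b : 𝒜 | (a, b) ∈ C}).ncard : ℤ) = t := by
    intro a
    obtain ⟨i, hi⟩ := hcover a
    have h := hrow i a hi
    have himg : C ∩ {p : 𝒜 × 𝒜 | p.1 = a} = (fun b => (a, b)) '' {b : 𝒜 | (a, b) ∈ C} := by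
      ext p
      simp only [Set.mem_inter_iff, Set.mem_setOf_eq, Set.mem_image]
      constructor
      · rintro ⟨hp, h1⟩
        exact ⟨p.2, by rw [← h1] at *; simpa using hp, by rw [← h1]⟩
      · rintro ⟨b, hb, rfl⟩; exact ⟨hb, rfl⟩
    rw [himg, Set.ncard_image_of_injective _ (fun b c h => by simpa using h)] at h
    exact h
  -- sum of block sizes
  have hAcard : (∑ k, ((A k).ncard : ℤ)) = q := by
    have h1 : ⋃ k, A k = Set.univ := Set.eq_univ_iff_forall.mpr fun a => Set.mem_iUnion.mpr (hcover a)
    have h2 := ncard_iUnion_eq A hdisj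
    rw [h1, Set.ncard_univ, Nat.card_eq_fintype_card, hq] at h2
    exact_mod_cast h2.symm
  -- column counts
  have hD : ∀ x : Fin (m + 2) → 𝒜,
      2 * (({a : 𝒜 | ∃ k, a ∈ A k ∧ (a, x k.succ) ∈ C}).ncard : ℤ) = t := by
    intro x
    have hun : {a : 𝒜 | ∃ k, a ∈ A k ∧ (a, x k.succ) ∈ C}
        = ⋃ k, {a : 𝒜 | a ∈ A k ∧ (a, x k.succ) ∈ C} := by ext a; simp
    have hcards : ∀ k, 2 * (q : ℤ) * (({a : 𝒜 | a ∈ A k ∧ (a, x k.succ) ∈ C}).ncard : ℤ)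
        = t * ((A k).ncard : ℤ) := by
      intro k
      obtain ⟨a0, ha0⟩ := hne k
      have h := hcol k a0 ha0 (x k.succ)
      have himg : C ∩ (A k ×ˢ ({x k.succ} : Set 𝒜))
          = (fun a => (a, x k.succ)) '' {a : 𝒜 | a ∈ A k ∧ (a, x k.succ) ∈ C} := by
        ext p
        simp only [Set.mem_inter_iff, Set.mem_prod, Set.mem_singleton_iff, Set.mem_image,
          Set.mem_setOf_eq]
        constructor
        · rintro ⟨hp, h1, h2⟩
          exact ⟨p.1, ⟨h1, by rw [← h2] at *; simpa using hp⟩, by rw [← h2]⟩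
        · rintro ⟨a, ⟨h1, h2⟩, rfl⟩; exact ⟨h2, h1, rfl⟩
      rw [himg, Set.ncard_image_of_injective _ (fun b c h => by simpa using h)] at h
      exact h
    have hdis2 : ∀ i j, i ≠ j → Disjoint {a : 𝒜 | a ∈ A i ∧ (a, x i.succ) ∈ C}
        {a : 𝒜 | a ∈ A j ∧ (a, x j.succ) ∈ C} :=
      fun i j hij => (hdisj i j hij).mono (fun a ha => ha.1) (fun a ha => ha.1)
    rw [hun, ncard_iUnion_eq _ hdis2]
    have hsum : 2 * (q : ℤ) * (∑ k, (({a : 𝒜 | a ∈ A k ∧ (a, x k.succ) ∈ C}).ncard : ℤ))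
        = t * (q : ℤ) := by
      rw [Finset.mul_sum]
      rw [show (t : ℤ) * (q : ℤ) = ∑ k, t * ((A k).ncard : ℤ) by
        rw [← Finset.mul_sum, hAcard]]
      exact Finset.sum_congr rfl fun k _ => hcards k
    apply mul_left_cancel₀ hq0
    push_cast
    push_cast at hsum
    linear_combination hsum
  -- update lemmas
  have hup0 : ∀ (x : Fin (m + 2) → 𝒜) (a : 𝒜),
      Function.update x 0 a ∈ Cπ ↔ a ∈ {a : 𝒜 | ∃ k, a ∈ A k ∧ (a, x k.succ) ∈ C} := by
    intro x a
    rw [hCπ]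
    simp [Function.update_apply, Fin.succ_ne_zero]
  have hupI : ∀ (x : Fin (m + 2) → 𝒜) (i : Fin (m + 1)) (a : 𝒜), x 0 ∈ A i →
      (Function.update x i.succ a ∈ Cπ ↔ (x 0, a) ∈ C) := by
    intro x i a hx0
    have h0 : Function.update x i.succ a 0 = x 0 :=
      Function.update_of_ne (Ne.symm (Fin.succ_ne_zero i)) _ _
    rw [hmem _ i (by rwa [h0]), h0, Function.update_self]
  have hupK : ∀ (x : Fin (m + 2) → 𝒜) (i k : Fin (m + 1)) (a : 𝒜), x 0 ∈ A i → k ≠ i →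
      (Function.update x k.succ a ∈ Cπ ↔ x ∈ Cπ) := by
    intro x i k a hx0 hki
    have h0 : Function.update x k.succ a 0 = x 0 :=
      Function.update_of_ne (Ne.symm (Fin.succ_ne_zero k)) _ _
    have hI : Function.update x k.succ a i.succ = x i.succ :=
      Function.update_of_ne (fun h => hki (Fin.succ_injective _ h).symm) _ _
    rw [hmem _ i (by rwa [h0]), h0, hI, hmem x i hx0]
  have hcardne : ∀ c : 𝒜, ({a : 𝒜 | a ≠ c}).ncard + 1 = q := by
    intro c
    have h1 : {a : 𝒜 | a ≠ c} = Set.univ \ {c} := by ext a; simp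
    rw [h1, Set.ncard_diff_singleton_add_one (Set.mem_univ c), Set.ncard_univ,
      Nat.card_eq_fintype_card, hq]
  have htot : ∀ (x : Fin (m + 2) → 𝒜) (j : Fin (m + 2)),
      ({a : 𝒜 | a ≠ x j ∧ Function.update x j a ∈ Cπ}).ncard
        + ({a : 𝒜 | a ≠ x j ∧ Function.update x j a ∈ Cπᶜ}).ncard + 1 = q := by
    intro x j
    have hu : {a : 𝒜 | a ≠ x j} = {a : 𝒜 | a ≠ x j ∧ Function.update x j a ∈ Cπ}
        ∪ {a : 𝒜 | a ≠ x j ∧ Function.update x j a ∈ Cπᶜ} := by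
      ext a; by_cases h : Function.update x j a ∈ Cπ <;> simp [h]
    have hd : Disjoint {a : 𝒜 | a ≠ x j ∧ Function.update x j a ∈ Cπ}
        {a : 𝒜 | a ≠ x j ∧ Function.update x j a ∈ Cπᶜ} := by
      rw [Set.disjoint_left]
      rintro a ⟨_, h1⟩ ⟨_, h2⟩
      exact h2 h1
    rw [← hcardne (x j), hu, Set.ncard_union_eq hd]
  -- total neighbors
  have hsumtot : ∀ x : Fin (m + 2) → 𝒜,
      (((hammingGraph (m + 2) 𝒜).neighborSet x ∩ Cπ).ncard : ℤ)
        + (((hammingGraph (m + 2) 𝒜).neighborSet x ∩ Cπᶜ).ncard : ℤ) + (m + 2)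
        = (m + 2) * q := by
    intro x
    rw [nbr_count x Cπ, nbr_count x Cπᶜ]
    push_cast
    rw [← Finset.sum_add_distrib]
    have h1 : ∑ j : Fin (m + 2), ((({a : 𝒜 | a ≠ x j ∧ Function.update x j a ∈ Cπ}).ncard : ℤ)
        + (({a : 𝒜 | a ≠ x j ∧ Function.update x j a ∈ Cπᶜ}).ncard : ℤ))
        = (m + 2) * ((q : ℤ) - 1) := by
      rw [Finset.sum_congr rfl (fun j _ => (by have := htot x j; omega :
        (({a : 𝒜 | a ≠ x j ∧ Function.update x j a ∈ Cπ}).ncard : ℤ)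
        + (({a : 𝒜 | a ≠ x j ∧ Function.update x j a ∈ Cπᶜ}).ncard : ℤ) = (q : ℤ) - 1))]
      rw [Finset.sum_const, Finset.card_univ, Fintype.card_fin]
      push_cast; ring
    rw [h1]; ring
  -- in-count for x ∈ Cπ
  have hinC : ∀ x ∈ Cπ, (((hammingGraph (m + 2) 𝒜).neighborSet x ∩ Cπ).ncard : ℤ)
      = t - 2 + (m : ℤ) * ((q : ℤ) - 1) := by
    intro x hx
    obtain ⟨i, hx0, hxC⟩ := hx
    rw [nbr_count x Cπ]
    push_cast
    rw [Fin.sum_univ_succ]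
    rw [← Finset.add_sum_erase _ _ (Finset.mem_univ i)]
    have e0 : ({a : 𝒜 | a ≠ x 0 ∧ Function.update x 0 a ∈ Cπ}).ncard + 1
        = ({a : 𝒜 | ∃ k, a ∈ A k ∧ (a, x k.succ) ∈ C}).ncard := by
      have hs : {a : 𝒜 | a ≠ x 0 ∧ Function.update x 0 a ∈ Cπ}
          = {a : 𝒜 | ∃ k, a ∈ A k ∧ (a, x k.succ) ∈ C} \ {x 0} := by
        ext a
        rw [Set.mem_setOf_eq, hup0 x a, Set.mem_diff, Set.mem_singleton_iff]
        tauto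
      rw [hs, Set.ncard_diff_singleton_add_one
        (show x 0 ∈ {a : 𝒜 | ∃ k, a ∈ A k ∧ (a, x k.succ) ∈ C} from ⟨i, hx0, hxC⟩)]
    have eI : ({a : 𝒜 | a ≠ x i.succ ∧ Function.update x i.succ a ∈ Cπ}).ncard + 1
        = ({b : 𝒜 | (x 0, b) ∈ C}).ncard := by
      have hs : {a : 𝒜 | a ≠ x i.succ ∧ Function.update x i.succ a ∈ Cπ}
          = {b : 𝒜 | (x 0, b) ∈ C} \ {x i.succ} := by
        ext a
        rw [Set.mem_setOf_eq, hupI x i a hx0, Set.mem_diff, Set.mem_singleton_iff,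
          Set.mem_setOf_eq]
        tauto
      rw [hs, Set.ncard_diff_singleton_add_one
        (show x i.succ ∈ {b : 𝒜 | (x 0, b) ∈ C} from hxC)]
    have etail : ∑ k ∈ Finset.univ.erase i,
        (({a : 𝒜 | a ≠ x k.succ ∧ Function.update x k.succ a ∈ Cπ}).ncard : ℤ)
        = (m : ℤ) * ((q : ℤ) - 1) := by
      have hterm : ∀ k ∈ Finset.univ.erase i,
          (({a : 𝒜 | a ≠ x k.succ ∧ Function.update x k.succ a ∈ Cπ}).ncard : ℤ)
            = (q : ℤ) - 1 := by
        intro k hk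
        have hki : k ≠ i := Finset.ne_of_mem_erase hk
        have hs : {a : 𝒜 | a ≠ x k.succ ∧ Function.update x k.succ a ∈ Cπ}
            = {a : 𝒜 | a ≠ x k.succ} := by
          ext a
          rw [Set.mem_setOf_eq, hupK x i k a hx0 hki]
          exact and_iff_left ⟨i, hx0, hxC⟩
        have := hcardne (x k.succ)
        rw [hs]
        omega
      rw [Finset.sum_congr rfl hterm, Finset.sum_const,
        Finset.card_erase_of_mem (Finset.mem_univ i), Finset.card_univ, Fintype.card_fin,
        Nat.add_sub_cancel, nsmul_eq_mul]
    rw [etail]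
    have hd := hD x
    have hr := hR (x 0)
    have e0' : (({a : 𝒜 | a ≠ x 0 ∧ Function.update x 0 a ∈ Cπ}).ncard : ℤ)
        = (({a : 𝒜 | ∃ k, a ∈ A k ∧ (a, x k.succ) ∈ C}).ncard : ℤ) - 1 := by omega
    have eI' : (({a : 𝒜 | a ≠ x i.succ ∧ Function.update x i.succ a ∈ Cπ}).ncard : ℤ)
        = (({b : 𝒜 | (x 0, b) ∈ C}).ncard : ℤ) - 1 := by omega
    have hdr : (({a : 𝒜 | ∃ k, a ∈ A k ∧ (a, x k.succ) ∈ C}).ncard : ℤ)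
        + (({b : 𝒜 | (x 0, b) ∈ C}).ncard : ℤ) = t := by omega
    linear_combination e0' + eI' + hdr
  -- in-count for x ∉ Cπ
  have hinCc : ∀ x ∈ Cπᶜ, (((hammingGraph (m + 2) 𝒜).neighborSet x ∩ Cπ).ncard : ℤ) = t := by
    intro x hx
    obtain ⟨i, hx0⟩ := hcover (x 0)
    have hxC : (x 0, x i.succ) ∉ C := fun h => hx ((hmem x i hx0).mpr h)
    have hxn : x ∉ Cπ := hx
    rw [nbr_count x Cπ]
    push_cast
    rw [Fin.sum_univ_succ]
    rw [← Finset.add_sum_erase _ _ (Finset.mem_univ i)]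
    have e0 : ({a : 𝒜 | a ≠ x 0 ∧ Function.update x 0 a ∈ Cπ}).ncard
        = ({a : 𝒜 | ∃ k, a ∈ A k ∧ (a, x k.succ) ∈ C}).ncard := by
      have hnot : x 0 ∉ {a : 𝒜 | ∃ k, a ∈ A k ∧ (a, x k.succ) ∈ C} := by
        rintro ⟨k, hk, hkC⟩
        rw [huniq _ k i hk hx0] at hkC
        exact hxC hkC
      have hs : {a : 𝒜 | a ≠ x 0 ∧ Function.update x 0 a ∈ Cπ}
          = {a : 𝒜 | ∃ k, a ∈ A k ∧ (a, x k.succ) ∈ C} := by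
        ext a
        rw [Set.mem_setOf_eq, hup0 x a]
        constructor
        · exact fun h => h.2
        · intro h
          exact ⟨fun he => hnot (he ▸ h), h⟩
      rw [hs]
    have eI : ({a : 𝒜 | a ≠ x i.succ ∧ Function.update x i.succ a ∈ Cπ}).ncard
        = ({b : 𝒜 | (x 0, b) ∈ C}).ncard := by
      have hs : {a : 𝒜 | a ≠ x i.succ ∧ Function.update x i.succ a ∈ Cπ}
          = {b : 𝒜 | (x 0, b) ∈ C} := by
        ext a
        rw [Set.mem_setOf_eq, hupI x i a hx0, Set.mem_setOf_eq]
        constructor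
        · exact fun h => h.2
        · intro h
          exact ⟨fun he => hxC (he ▸ h), h⟩
      rw [hs]
    have etail : ∑ k ∈ Finset.univ.erase i,
        (({a : 𝒜 | a ≠ x k.succ ∧ Function.update x k.succ a ∈ Cπ}).ncard : ℤ) = 0 := by
      apply Finset.sum_eq_zero
      intro k hk
      have hki : k ≠ i := Finset.ne_of_mem_erase hk
      have hs : {a : 𝒜 | a ≠ x k.succ ∧ Function.update x k.succ a ∈ Cπ} = ∅ := by
        ext a
        rw [Set.mem_setOf_eq, hupK x i k a hx0 hki]
        simp [hxn]
      rw [hs]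
      simp
    rw [e0, eI, etail]
    have hd := hD x
    have hr := hR (x 0)
    omega
  -- nonempty witnesses
  have hA0 : Nonempty 𝒜 := Fintype.card_pos_iff.mp (by omega)
  obtain ⟨a⟩ := hA0
  obtain ⟨i, hi⟩ := hcover a
  have hra := hR a
  have hrow_ne : ({b : 𝒜 | (a, b) ∈ C}).Nonempty := by
    rw [Set.nonempty_iff_ne_empty]
    intro h
    rw [h] at hra
    simp at hra
    omega
  have hrow_lt : ∃ b : 𝒜, (a, b) ∉ C := by
    by_contra h
    push_neg at h
    have : {b : 𝒜 | (a, b) ∈ C} = Set.univ := Set.eq_univ_iff_forall.mpr h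
    rw [this, Set.ncard_univ, Nat.card_eq_fintype_card, hq] at hra
    omega
  obtain ⟨b1, hb1⟩ := hrow_ne
  obtain ⟨b2, hb2⟩ := hrow_lt
  have hwit : ∀ b : 𝒜, ∃ x : Fin (m + 2) → 𝒜, x 0 = a ∧ x i.succ = b := by
    intro b
    refine ⟨fun j => if j = i.succ then b else a, ?_, ?_⟩
    · simp [Ne.symm (Fin.succ_ne_zero i)]
    · simp
  constructor
  · refine ⟨?_, ?_, ?_, ?_⟩
    · obtain ⟨x, hx1, hx2⟩ := hwit b1
      exact ⟨x, i, by rwa [hx1], by rwa [hx1, hx2]⟩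
    · obtain ⟨x, hx1, hx2⟩ := hwit b2
      refine ⟨x, ?_⟩
      rintro ⟨j, hj, hjC⟩
      rw [hx1] at hj
      rw [huniq _ j i hj hi] at hjC
      rw [hx1, hx2] at hjC
      exact hb2 hjC
    · intro x hx
      have h1 := hinC x hx
      have h2 := hsumtot x
      constructor
      · rw [h1]; rfl
      · show _ = 2 * (q : ℤ) - t
        linear_combination h2 - h1
    · intro x hx
      have h1 := hinCc x hx
      have h2 := hsumtot x
      constructor
      · rw [h1]; rfl
      · show _ = 2 * (q : ℤ) - t - 2 + (m : ℤ) * ((q : ℤ) - 1)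
        linear_combination h2 - h1
  · refine ⟨![2 * (q : ℚ) - t, -t], ?_, ?_⟩
    · intro h
      have := congrFun h 1
      simp at this
      omega
    · funext j
      fin_cases j <;>
        simp [Matrix.mulVec, Matrix.map_apply, Matrix.map, Matrix.of_apply, dotProduct, Fin.sum_univ_two,
          Matrix.cons_val_zero, Matrix.cons_val_one, Matrix.head_cons, Pi.smul_apply,
          smul_eq_mul] <;> push_cast <;> ring
end

section
/- Let q be even, let 𝒜 have size q, let A₀ ⊆ 𝒜 with |A₀| = q/2 and A₁ = 𝒜∖A₀. Let C = {0001, 0011, 0010, 0110, 1110, 1100, 1101, 1001} ⊆ {0,1}^4 and let D = ⋃_{(x₁,x₂,x₃,x₄) ∈ C} A_{x₁} × A_{x₂} × A_{x₃} × A_{x₄} ⊆ 𝒜^4. Then (D, D̄) is an equitable 2-partition of the Hamming graph H(4,q) whose quotient matrix S satisfies S₁₁ − S₂₁ = λ₂(4,q) = 2q − 4. -/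
/-- The code `C = {0001, 0011, 0010, 0110, 1110, 1100, 1101, 1001} ⊆ {0,1}⁴`. -/
def cycleCode : Set (Fin 4 → Fin 2) :=
  {![0, 0, 0, 1], ![0, 0, 1, 1], ![0, 0, 1, 0], ![0, 1, 1, 0],
   ![1, 1, 1, 0], ![1, 1, 0, 0], ![1, 1, 0, 1], ![1, 0, 0, 1]}

open Finset

instance : DecidablePred (· ∈ cycleCode) := fun c =>
  decidable_of_iff (c = ![0,0,0,1] ∨ c = ![0,0,1,1] ∨ c = ![0,0,1,0] ∨ c = ![0,1,1,0] ∨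
    c = ![1,1,1,0] ∨ c = ![1,1,0,0] ∨ c = ![1,1,0,1] ∨ c = ![1,0,0,1])
    (by simp [cycleCode, Set.mem_insert_iff, Set.mem_singleton_iff])

lemma flip_in : ∀ c : Fin 4 → Fin 2,
    (univ.filter fun i => Function.update c i (c i + 1) ∈ cycleCode).card = 2 := by decide

lemma flip_out : ∀ c : Fin 4 → Fin 2,
    (univ.filter fun i => Function.update c i (c i + 1) ∉ cycleCode).card = 2 := by decide

section
variable {n : ℕ} {𝒜 : Type*} [DecidableEq 𝒜]

lemma hamming_one_iff (x y : Fin n → 𝒜) :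
    hammingDist x y = 1 ↔ ∃ i, x i ≠ y i ∧ ∀ j, j ≠ i → x j = y j := by
  rw [hammingDist, Finset.card_eq_one]
  constructor
  · rintro ⟨i, hi⟩
    refine ⟨i, ?_, ?_⟩
    · have : i ∈ Finset.univ.filter fun j => x j ≠ y j := hi ▸ Finset.mem_singleton_self i
      simpa using this
    · intro j hj
      by_contra h
      have : j ∈ Finset.univ.filter fun j => x j ≠ y j := by simpa using h
      rw [hi, Finset.mem_singleton] at this; exact hj this
  · rintro ⟨i, hi, hj⟩
    refine ⟨i, ?_⟩
    ext j
    simp only [Finset.mem_filter, Finset.mem_univ, true_and, Finset.mem_singleton]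
    constructor
    · intro h; by_contra hne; exact h (hj j hne)
    · rintro rfl; exact hi

set_option linter.unusedSectionVars false
variable [Fintype 𝒜]

lemma neighbor_count (x : Fin n → 𝒜) (P : (Fin n → 𝒜) → Prop) [DecidablePred P] :
    (univ.filter fun y => hammingDist x y = 1 ∧ P y).card
      = ∑ i, (univ.filter fun a : 𝒜 => a ≠ x i ∧ P (Function.update x i a)).card := by
  have hset : (univ.filter fun y => hammingDist x y = 1 ∧ P y)
      = univ.biUnion (fun i => (univ.filter fun a : 𝒜 => a ≠ x i ∧
          P (Function.update x i a)).image (Function.update x i)) := by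
    ext y
    simp only [mem_filter, mem_univ, true_and, mem_biUnion, mem_image, hamming_one_iff]
    constructor
    · rintro ⟨⟨i, hi, hrest⟩, hP⟩
      have hy : Function.update x i (y i) = y := by
        funext j
        rcases eq_or_ne j i with rfl | hj
        · simp
        · simp [Function.update_of_ne hj, hrest j hj]
      exact ⟨i, y i, ⟨Ne.symm hi, by rwa [hy]⟩, hy⟩
    · rintro ⟨i, a, ⟨ha, hPa⟩, rfl⟩
      refine ⟨⟨i, ?_, fun j hj => by simp [Function.update_of_ne hj]⟩, hPa⟩
      simpa using Ne.symm ha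
  rw [hset, Finset.card_biUnion]
  · refine Finset.sum_congr rfl fun i _ => Finset.card_image_of_injOn ?_
    intro a _ b _ hab
    simpa using congrFun hab i
  · intro i _ j hj hij
    simp only [Finset.disjoint_left, mem_image, mem_filter, mem_univ, true_and]
    rintro y ⟨a, ⟨ha, _⟩, rfl⟩ ⟨b, ⟨hb, _⟩, hy⟩
    have := congrFun hy i
    simp only [Function.update_of_ne hij, Function.update_self] at this
    exact ha this.symm

end

section
variable {𝒜 : Type*} [Fintype 𝒜] [DecidableEq 𝒜] (A₀ : Set 𝒜) [DecidablePred (· ∈ A₀)]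

/-- The membership pattern bit of an element. -/
def bitOf (a : 𝒜) : Fin 2 := if a ∈ A₀ then 0 else 1

variable {m : ℕ} (hm : A₀.ncard = m) (hcard : Fintype.card 𝒜 = 2 * m)

set_option linter.unusedSectionVars false

include hm hcard in
lemma fiber_card (b : Fin 2) : (univ.filter fun a => bitOf A₀ a = b).card = m := by
  have hb2 : ∀ b : Fin 2, b = 0 ∨ b = 1 := by decide
  have h0 : (univ.filter fun a => a ∈ A₀).card = m := by
    rw [← hm, Set.ncard_eq_toFinset_card']
    congr 1
    ext a; simp
  have e0 : (univ.filter fun a => bitOf A₀ a = 0) = (univ.filter fun a => a ∈ A₀) := by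
    ext a; by_cases h : a ∈ A₀ <;> simp [bitOf, h]
  have h0' : (univ.filter fun a => bitOf A₀ a = 0).card = m := by rw [e0, h0]
  have hsum := Finset.card_filter_add_card_filter_not
    (s := (univ : Finset 𝒜)) (p := fun a => bitOf A₀ a = 0)
  have hone : (univ.filter fun a => ¬ bitOf A₀ a = 0)
      = (univ.filter fun a => bitOf A₀ a = 1) := by
    ext a
    simp only [mem_filter, mem_univ, true_and]
    rcases hb2 (bitOf A₀ a) with h | h <;> simp [h]
  rw [hone, Finset.card_univ, hcard] at hsum
  have h1' : (univ.filter fun a => bitOf A₀ a = 1).card = m := by omega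
  fin_cases b
  · exact h0'
  · exact h1'

include hm hcard in
lemma coord_count (hm1 : 1 ≤ m) (Q : Fin 2 → Prop) [DecidablePred Q] (v : 𝒜) :
    (univ.filter fun a : 𝒜 => a ≠ v ∧ Q (bitOf A₀ a)).card
      = (if Q (bitOf A₀ v) then m - 1 else 0) + (if Q (bitOf A₀ v + 1) then m else 0) := by
  have hb : ∀ b0 b : Fin 2, b = b0 ∨ b = b0 + 1 := by decide
  have hfib := fiber_card A₀ hm hcard
  by_cases h0 : Q (bitOf A₀ v) <;> by_cases h1 : Q (bitOf A₀ v + 1)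
  · have : (univ.filter fun a : 𝒜 => a ≠ v ∧ Q (bitOf A₀ a)) = univ.erase v := by
      ext a
      simp only [mem_filter, mem_univ, true_and, mem_erase, and_true]
      constructor
      · exact fun h => h.1
      · intro h
        refine ⟨h, ?_⟩
        rcases hb (bitOf A₀ v) (bitOf A₀ a) with h' | h' <;> rw [h'] <;> assumption
    rw [this, Finset.card_erase_of_mem (mem_univ v), Finset.card_univ, hcard]
    simp [h0, h1]; omega
  · have : (univ.filter fun a : 𝒜 => a ≠ v ∧ Q (bitOf A₀ a))
        = (univ.filter fun a => bitOf A₀ a = bitOf A₀ v).erase v := by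
      ext a
      simp only [mem_filter, mem_univ, true_and, mem_erase]
      constructor
      · rintro ⟨hav, hQ⟩
        refine ⟨hav, ?_⟩
        rcases hb (bitOf A₀ v) (bitOf A₀ a) with h' | h'
        · exact h'
        · exact absurd (h' ▸ hQ) h1
      · rintro ⟨hav, hba⟩
        exact ⟨hav, hba ▸ h0⟩
    rw [this, Finset.card_erase_of_mem (a := v)
      (s := univ.filter fun a => bitOf A₀ a = bitOf A₀ v) (by simp), hfib]
    simp [h0, h1]
  · have hne : (bitOf A₀ v + 1 : Fin 2) ≠ bitOf A₀ v := by
      rcases hb 0 (bitOf A₀ v) with h | h <;> rw [h] <;> decide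
    have : (univ.filter fun a : 𝒜 => a ≠ v ∧ Q (bitOf A₀ a))
        = (univ.filter fun a => bitOf A₀ a = bitOf A₀ v + 1) := by
      apply Finset.filter_congr; intro a _
      constructor
      · rintro ⟨hav, hQ⟩
        rcases hb (bitOf A₀ v) (bitOf A₀ a) with h' | h'
        · exact absurd (h' ▸ hQ) h0
        · exact h'
      · intro h
        refine ⟨fun h' => hne (h' ▸ h).symm, h ▸ h1⟩
    rw [this, hfib]
    simp [h0, h1]
  · have : (univ.filter fun a : 𝒜 => a ≠ v ∧ Q (bitOf A₀ a)) = ∅ := by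
      ext a
      simp only [mem_filter, mem_univ, true_and, Finset.notMem_empty, iff_false, not_and]
      intro _ hQ
      rcases hb (bitOf A₀ v) (bitOf A₀ a) with h' | h'
      · exact h0 (h' ▸ hQ)
      · exact h1 (h' ▸ hQ)
    rw [this]
    simp [h0, h1]

include hm hcard in
lemma main_count (hm1 : 1 ≤ m) (x : Fin 4 → 𝒜) (P : (Fin 4 → Fin 2) → Prop) [DecidablePred P]
    (hflip : (univ.filter fun i : Fin 4 =>
      P (Function.update (fun j => bitOf A₀ (x j)) i (bitOf A₀ (x i) + 1))).card = 2) :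
    (univ.filter fun y : Fin 4 → 𝒜 => hammingDist x y = 1 ∧ P (fun j => bitOf A₀ (y j))).card
      = (if P (fun j => bitOf A₀ (x j)) then 4 * (m - 1) else 0) + 2 * m := by
  rw [neighbor_count x (fun y => P (fun j => bitOf A₀ (y j)))]
  have hupd : ∀ (i : Fin 4) (a : 𝒜), (fun j => bitOf A₀ (Function.update x i a j))
      = Function.update (fun j => bitOf A₀ (x j)) i (bitOf A₀ a) := by
    intro i a; funext j
    rcases eq_or_ne j i with rfl | hj
    · simp
    · simp [Function.update_of_ne hj]
  have hsum : ∑ i, (univ.filter fun a : 𝒜 => a ≠ x i ∧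
        P (fun j => bitOf A₀ (Function.update x i a j))).card
      = ∑ i : Fin 4, ((if P (fun j => bitOf A₀ (x j)) then m - 1 else 0)
        + (if P (Function.update (fun j => bitOf A₀ (x j)) i (bitOf A₀ (x i) + 1))
            then m else 0)) := by
    refine Finset.sum_congr rfl fun i _ => ?_
    have h := coord_count A₀ hm hcard hm1
      (Q := fun b => P (Function.update (fun j => bitOf A₀ (x j)) i b)) (x i)
    simp only [hupd]
    rw [h]
    congr 2
    rw [show Function.update (fun j => bitOf A₀ (x j)) i (bitOf A₀ (x i))
        = (fun j => bitOf A₀ (x j)) from Function.update_eq_self i _]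
  rw [hsum, Finset.sum_add_distrib, Finset.sum_const, ← Finset.sum_filter, Finset.sum_const,
    hflip]
  simp only [Finset.card_univ, Fintype.card_fin, smul_eq_mul]
  by_cases hc : P (fun j => bitOf A₀ (x j)) <;> simp [hc]

end

/-- Construction B: Let `q` be even, `|𝒜| = q`, `A₀ ⊆ 𝒜` with
`|A₀| = q/2` and `A₁ = 𝒜 ∖ A₀`. Let `D = ⋃_{c ∈ C} A_{c₁} × A_{c₂} × A_{c₃} × A_{c₄}`,
i.e. `D = {x : the pattern of membership of the x_i in A₀ gives an element of C}`.
Then `(D, Dᶜ)` is an equitable 2-partition of `H(4,q)` whose quotient matrix `S`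
satisfies `S₁₁ - S₂₁ = λ₂(4,q) = 2q - 4`. -/
theorem stmt10 {𝒜 : Type*} [Fintype 𝒜] [DecidableEq 𝒜] (q : ℕ)
    (hq : Fintype.card 𝒜 = q) (hqeven : Even q) (hq2 : 2 ≤ q)
    (A₀ : Set 𝒜) [DecidablePred (· ∈ A₀)] (hA₀ : 2 * A₀.ncard = q) :
    ∃ S : Matrix (Fin 2) (Fin 2) ℤ,
      IsEquitable2 (hammingGraph 4 𝒜)
        {x : Fin 4 → 𝒜 | (fun i => if x i ∈ A₀ then (0 : Fin 2) else 1) ∈ cycleCode} S ∧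
      S 0 0 - S 1 0 = 2 * (q : ℤ) - 4 := by
  classical
  obtain ⟨m, hm⟩ : ∃ m, A₀.ncard = m := ⟨_, rfl⟩
  have hqm : q = 2 * m := by omega
  have hcard : Fintype.card 𝒜 = 2 * m := by rw [hq, hqm]
  have hm1 : 1 ≤ m := by omega
  set D : Set (Fin 4 → 𝒜) :=
    {x | (fun i => if x i ∈ A₀ then (0 : Fin 2) else 1) ∈ cycleCode} with hD
  have hmemD : ∀ y : Fin 4 → 𝒜, y ∈ D ↔ (fun j => bitOf A₀ (y j)) ∈ cycleCode := by
    intro y; rfl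
  have hfib := fiber_card A₀ hm hcard
  obtain ⟨a, ha⟩ : ∃ a : 𝒜, bitOf A₀ a = 0 := by
    obtain ⟨a, ha⟩ := Finset.card_pos.mp (by rw [hfib 0]; omega)
    exact ⟨a, (Finset.mem_filter.mp ha).2⟩
  obtain ⟨b, hb⟩ : ∃ b : 𝒜, bitOf A₀ b = 1 := by
    obtain ⟨b, hb⟩ := Finset.card_pos.mp (by rw [hfib 1]; omega)
    exact ⟨b, (Finset.mem_filter.mp hb).2⟩
  have ha' : a ∈ A₀ := by
    by_contra h; simp only [bitOf, if_neg h] at ha; exact absurd ha (by decide)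
  have hb' : b ∉ A₀ := by
    intro h; simp only [bitOf, if_pos h] at hb; exact absurd hb (by decide)
  -- the count lemma specialized
  have ecount : ∀ (x : Fin 4 → 𝒜) (P : (Fin 4 → Fin 2) → Prop) (_ : DecidablePred P),
      (hflip : (univ.filter fun i : Fin 4 =>
        P (Function.update (fun j => bitOf A₀ (x j)) i (bitOf A₀ (x i) + 1))).card = 2) →
      ((univ.filter fun y : Fin 4 → 𝒜 =>
          hammingDist x y = 1 ∧ P (fun j => bitOf A₀ (y j))).card
        = (if P (fun j => bitOf A₀ (x j)) then 4 * (m - 1) else 0) + 2 * m) := by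
    intro x P hP hflip
    exact main_count A₀ hm hcard hm1 x P hflip
  refine ⟨!![((4 * (m - 1) + 2 * m : ℕ) : ℤ), ((2 * m : ℕ) : ℤ);
             ((2 * m : ℕ) : ℤ), ((4 * (m - 1) + 2 * m : ℕ) : ℤ)], ⟨?_, ?_, ?_, ?_⟩, ?_⟩
  · -- D nonempty
    refine ⟨![a, a, a, b], ?_⟩
    have hpat : (fun i => if (![a, a, a, b]) i ∈ A₀ then (0 : Fin 2) else 1)
        = ![0, 0, 0, 1] := by
      funext i; fin_cases i <;> simp [ha', hb']
    show (fun i => if (![a, a, a, b]) i ∈ A₀ then (0 : Fin 2) else 1) ∈ cycleCode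
    rw [hpat]; decide
  · -- Dᶜ nonempty
    refine ⟨fun _ => a, ?_⟩
    show ¬ ((fun i => if a ∈ A₀ then (0 : Fin 2) else 1) ∈ cycleCode)
    have hpat : (fun _ : Fin 4 => if a ∈ A₀ then (0 : Fin 2) else 1) = ![0, 0, 0, 0] := by
      funext i; fin_cases i <;> simp [ha']
    rw [hpat]; decide
  · -- x ∈ D
    intro x hx
    have hxC : (fun j => bitOf A₀ (x j)) ∈ cycleCode := (hmemD x).mp hx
    constructor
    · have e1 : (hammingGraph 4 𝒜).neighborSet x ∩ D
          = ↑(univ.filter fun y : Fin 4 → 𝒜 =>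
              hammingDist x y = 1 ∧ (fun j => bitOf A₀ (y j)) ∈ cycleCode) := by
        ext y
        simp only [Set.mem_inter_iff, SimpleGraph.mem_neighborSet, Finset.coe_filter,
          Set.mem_setOf_eq, Finset.mem_univ, true_and]
        exact and_congr Iff.rfl (hmemD y)
      rw [e1, Set.ncard_coe_finset,
        ecount x (· ∈ cycleCode) inferInstance (flip_in _), if_pos hxC]
      simp
    · have e2 : (hammingGraph 4 𝒜).neighborSet x ∩ Dᶜ
          = ↑(univ.filter fun y : Fin 4 → 𝒜 =>
              hammingDist x y = 1 ∧ (fun j => bitOf A₀ (y j)) ∉ cycleCode) := by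
        ext y
        simp only [Set.mem_inter_iff, SimpleGraph.mem_neighborSet, Finset.coe_filter,
          Set.mem_setOf_eq, Finset.mem_univ, true_and, Set.mem_compl_iff]
        exact and_congr Iff.rfl (not_congr (hmemD y))
      rw [e2, Set.ncard_coe_finset,
        ecount x (· ∉ cycleCode) inferInstance (flip_out _), if_neg (by simpa using hxC)]
      simp
  · -- x ∈ Dᶜ
    intro x hx
    have hxC : (fun j => bitOf A₀ (x j)) ∉ cycleCode := fun h => hx ((hmemD x).mpr h)
    constructor
    · have e1 : (hammingGraph 4 𝒜).neighborSet x ∩ D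
          = ↑(univ.filter fun y : Fin 4 → 𝒜 =>
              hammingDist x y = 1 ∧ (fun j => bitOf A₀ (y j)) ∈ cycleCode) := by
        ext y
        simp only [Set.mem_inter_iff, SimpleGraph.mem_neighborSet, Finset.coe_filter,
          Set.mem_setOf_eq, Finset.mem_univ, true_and]
        exact and_congr Iff.rfl (hmemD y)
      rw [e1, Set.ncard_coe_finset,
        ecount x (· ∈ cycleCode) inferInstance (flip_in _), if_neg hxC]
      simp
    · have e2 : (hammingGraph 4 𝒜).neighborSet x ∩ Dᶜ
          = ↑(univ.filter fun y : Fin 4 → 𝒜 =>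
              hammingDist x y = 1 ∧ (fun j => bitOf A₀ (y j)) ∉ cycleCode) := by
        ext y
        simp only [Set.mem_inter_iff, SimpleGraph.mem_neighborSet, Finset.coe_filter,
          Set.mem_setOf_eq, Finset.mem_univ, true_and, Set.mem_compl_iff]
        exact and_congr Iff.rfl (not_congr (hmemD y))
      rw [e2, Set.ncard_coe_finset,
        ecount x (· ∉ cycleCode) inferInstance (flip_out _), if_pos hxC]
      simp
  · -- arithmetic
    show ((4 * (m - 1) + 2 * m : ℕ) : ℤ) - ((2 * m : ℕ) : ℤ) = 2 * (q : ℤ) - 4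
    rw [hqm]
    push_cast
    omega
end
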